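/- Let λ ≠ 0 and let γ : [0, s_f] → ℝ³ be the horizontal lift starting at the origin of the arc-length parametrized circle arc c(s) = A + (1/λ)(sin(λs - α₀), cos(λs - α₀)), where A = (1/λ)(sin(α₀), cos(α₀)) (so c(0) = 0). Then the third component satisfies γ³(s) = (sin(λs) - λs)/(2λ²) for all s ∈ [0, s_f]. -/

import Mathlib

open Set

lemma aux_hasDerivAt_arg (lam α0 ξ : ℝ) :
    HasDerivAt (fun s => lam * s - α0) lam ξ := by
  simpa using ((hasDerivAt_id ξ).const_mul lam).sub_const α0

/-- The third component of the horizontal lift, starting at the origin, of the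
arc-length parametrized circle arc c(s) = A + (1/λ)(sin(λs-α₀), cos(λs-α₀))
with c(0) = 0 is γ³(s) = (sin(λs) - λs)/(2λ²). -/
theorem lift_of_circle_arc_third_component
    (lam α0 sf : ℝ) (hlam : lam ≠ 0) (hsf : 0 ≤ sf)
    (c1 c2 : ℝ → ℝ)
    (hc1 : c1 = fun s => Real.sin α0 / lam + Real.sin (lam * s - α0) / lam)
    (hc2 : c2 = fun s => -Real.cos α0 / lam + Real.cos (lam * s - α0) / lam) :
    ∀ s ∈ Icc (0:ℝ) sf,
      (∫ ξ in (0:ℝ)..s,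
        (-(1/2) * c2 ξ * deriv c1 ξ + (1/2) * c1 ξ * deriv c2 ξ)) =
      (Real.sin (lam * s) - lam * s) / (2 * lam^2) := by
  intro s hs
  have hd1 : ∀ ξ, deriv c1 ξ = Real.cos (lam * ξ - α0) := by
    intro ξ
    have h : HasDerivAt c1 (Real.cos (lam * ξ - α0)) ξ := by
      rw [hc1]
      have := (((aux_hasDerivAt_arg lam α0 ξ).sin).div_const lam).const_add
        (Real.sin α0 / lam)
      rw [← mul_div_cancel_right₀ (Real.cos (lam * ξ - α0)) hlam]
      exact this
    exact h.deriv
  have hd2 : ∀ ξ, deriv c2 ξ = -Real.sin (lam * ξ - α0) := by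
    intro ξ
    have h : HasDerivAt c2 (-Real.sin (lam * ξ - α0)) ξ := by
      rw [hc2]
      have := (((aux_hasDerivAt_arg lam α0 ξ).cos).div_const lam).const_add
        (-Real.cos α0 / lam)
      rw [← mul_div_cancel_right₀ (-Real.sin (lam * ξ - α0)) hlam]
      exact this
    exact h.deriv
  have hint : ∀ ξ : ℝ,
      (-(1/2) * c2 ξ * deriv c1 ξ + (1/2) * c1 ξ * deriv c2 ξ)
      = (Real.cos (lam * ξ) - 1) / (2 * lam) := by
    intro ξ
    rw [hd1, hd2, hc1, hc2]
    have key : Real.cos (lam * ξ) =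
        Real.cos α0 * Real.cos (lam * ξ - α0) -
          Real.sin α0 * Real.sin (lam * ξ - α0) := by
      rw [← Real.cos_add]; ring_nf
    have pyth := Real.sin_sq_add_cos_sq (lam * ξ - α0)
    rw [key]
    field_simp
    linear_combination (-1) * pyth
  simp only [hint]
  have hF : ∀ ξ ∈ Icc (0:ℝ) s,
      HasDerivAt (fun t => (Real.sin (lam * t) / lam - t) / (2 * lam))
        ((Real.cos (lam * ξ) - 1) / (2 * lam)) ξ := by
    intro ξ _
    have h1 : HasDerivAt (fun t => Real.sin (lam * t) / lam - t)
        (Real.cos (lam * ξ) - 1) ξ := by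
      have hs : HasDerivAt (fun t => Real.sin (lam * t))
          (Real.cos (lam * ξ) * lam) ξ := by
        simpa using (((hasDerivAt_id ξ).const_mul lam).sin)
      have := (hs.div_const lam).sub (hasDerivAt_id ξ)
      rw [← mul_div_cancel_right₀ (Real.cos (lam * ξ)) hlam]
      exact this
    exact h1.div_const (2 * lam)
  have hcont : IntervalIntegrable
      (fun ξ => (Real.cos (lam * ξ) - 1) / (2 * lam)) MeasureTheory.volume 0 s := by
    apply Continuous.intervalIntegrable
    fun_prop
  have := intervalIntegral.integral_eq_sub_of_hasDerivAt
    (fun ξ hξ => hF ξ (by simpa [uIcc_of_le hs.1] using hξ)) hcont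
  rw [this, mul_zero, Real.sin_zero]
  field_simp
  ring
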